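/- Let (V,q) be a nondegenerate quadratic space and τ an isometry. The Wall form ω_τ is symmetric if and only if τ² = id. -/

import Mathlib

theorem wall_stmt5 {F V : Type*} [Field F] [AddCommGroup V] [Module F V]
    [FiniteDimensional F V] (q : QuadraticForm F V)
    (hq : LinearMap.BilinForm.Nondegenerate (QuadraticMap.polarBilin q))
    (τ : V →ₗ[F] V) (hτ : ∀ x, q (τ x) = q x) :
    (∀ x y : V, QuadraticMap.polarBilin q (τ x - x) y =
        QuadraticMap.polarBilin q (τ y - y) x) ↔ τ ∘ₗ τ = LinearMap.id := by
  set B := QuadraticMap.polarBilin q with hBdef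
  have hcomm : ∀ x y, B x y = B y x := by
    intro x y
    simp [hBdef, QuadraticMap.polarBilin_apply_apply, QuadraticMap.polar_comm]
  have hB : ∀ x y, B (τ x) (τ y) = B x y := by
    intro x y
    simp only [hBdef, QuadraticMap.polarBilin_apply_apply, QuadraticMap.polar, ← map_add, hτ]
  constructor
  · intro h
    -- first: B (τ x) y = B x (τ y)
    have key : ∀ x y, B (τ x) y = B x (τ y) := by
      intro x y
      have h1 := h x y
      simp only [map_sub, LinearMap.sub_apply] at h1
      linear_combination h1 + hcomm (τ y) x - hcomm y x
    ext y
    simp only [LinearMap.comp_apply, LinearMap.id_apply]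
    have hz : ∀ x, B (τ (τ y) - y) x = 0 := by
      intro x
      have h1 : B (τ x) (τ y) = B x (τ (τ y)) := key x (τ y)
      rw [hB] at h1
      rw [hcomm]
      simp only [map_sub]
      rw [← h1]
      ring
    exact sub_eq_zero.mp (hq.1 _ hz)
  · intro h
    have hid : ∀ y, τ (τ y) = y := by
      intro y
      have := congrArg (fun f => f y) h
      simpa using this
    intro x y
    have key : B (τ x) y = B x (τ y) := by
      conv_rhs => rw [← hB x (τ y), hid y]
    simp only [map_sub, LinearMap.sub_apply, key, hcomm y x]
    rw [hcomm (τ y) x]
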